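/- Let u*, v*, α, β, γ, d, K > 0 with γ = α/β, and suppose d ≥ (β u* + α v*) K / (2 √(γ u* v*)). Then for all u ∈ [0, K] and v ∈ [0, βK/α], the matrix B(u,v) = [[u*(d + αv), -α(u*v + v*u)/2], [-α(u*v + v*u)/2, v*(γd + αu)]] is positive semidefinite; in particular det B(u,v) ≥ γ u* v* d² - ((βu* + αv*)K/2)² ≥ 0. -/

import Mathlib

open Matrix

lemma quad_nonneg' (a b c y z : ℝ) (ha : 0 ≤ a) (hc : 0 ≤ c) (h : b ^ 2 ≤ a * c) :
    0 ≤ a * y ^ 2 - 2 * b * y * z + c * z ^ 2 := by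
  rcases ha.eq_or_lt with rfl | ha'
  · have hb : b = 0 := by nlinarith [sq_nonneg b]
    subst hb
    nlinarith [mul_nonneg hc (sq_nonneg z)]
  · nlinarith [sq_nonneg (a * y - b * z), mul_nonneg (sub_nonneg.mpr h) (sq_nonneg z)]

lemma fin2_posSemidef (a b c : ℝ) (ha : 0 ≤ a) (hc : 0 ≤ c) (h : b ^ 2 ≤ a * c) :
    (!![a, b; b, c]).PosSemidef := by
  constructor
  · ext i j
    fin_cases i <;> fin_cases j <;> simp [Matrix.conjTranspose, Matrix.vecHead, Matrix.vecTail]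
  · intro x
    have key := quad_nonneg' a (-b) c (x 0) (x 1) ha hc (by rwa [neg_pow, neg_one_sq, one_mul])
    simp [Matrix.mulVec, dotProduct, Finsupp.sum_fintype, Fin.sum_univ_two, Matrix.vecHead, Matrix.vecTail]
    nlinarith [key]

theorem B_posSemidef
    (us vs α β γ d K : ℝ)
    (hus : 0 < us) (hvs : 0 < vs) (hα : 0 < α) (hβ : 0 < β)
    (hγ : 0 < γ) (hd : 0 < d) (hK : 0 < K)
    (hγdef : γ = α / β)
    (hdlarge : d ≥ (β * us + α * vs) * K / (2 * Real.sqrt (γ * us * vs))) :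
    ∀ u v : ℝ, u ∈ Set.Icc 0 K → v ∈ Set.Icc 0 (β * K / α) →
      (!![us * (d + α * v), -(α * (us * v + vs * u) / 2);
         -(α * (us * v + vs * u) / 2), vs * (γ * d + α * u)]).PosSemidef ∧
      γ * us * vs * d ^ 2 - ((β * us + α * vs) * K / 2) ^ 2 ≤
        (!![us * (d + α * v), -(α * (us * v + vs * u) / 2);
           -(α * (us * v + vs * u) / 2), vs * (γ * d + α * u)]).det ∧
      0 ≤ γ * us * vs * d ^ 2 - ((β * us + α * vs) * K / 2) ^ 2 := by
  intro u v hu hv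
  obtain ⟨hu0, huK⟩ := hu
  obtain ⟨hv0, hvK⟩ := hv
  set S := Real.sqrt (γ * us * vs) with hSdef
  have hSpos : 0 < S := Real.sqrt_pos.mpr (by positivity)
  have hS2 : S ^ 2 = γ * us * vs := Real.sq_sqrt (by positivity)
  have hX0 : 0 ≤ (β * us + α * vs) * K := by positivity
  have hSd : (β * us + α * vs) * K ≤ 2 * S * d := by
    rw [ge_iff_le, div_le_iff₀ (by positivity)] at hdlarge
    linarith
  have h3 : 0 ≤ γ * us * vs * d ^ 2 - ((β * us + α * vs) * K / 2) ^ 2 := by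
    nlinarith [sq_nonneg (2 * S * d - (β * us + α * vs) * K), hSpos.le, hd.le]
  have hb : α * (us * v + vs * u) ≤ (β * us + α * vs) * K := by
    have h1 : α * v ≤ β * K := by
      rw [le_div_iff₀ hα] at hvK; linarith
    have h2 : us * (α * v) ≤ us * (β * K) := mul_le_mul_of_nonneg_left h1 hus.le
    have h4 : α * vs * u ≤ α * vs * K := mul_le_mul_of_nonneg_left huK (by positivity)
    nlinarith
  have hb0 : 0 ≤ α * (us * v + vs * u) := by positivity
  have hdet : (!![us * (d + α * v), -(α * (us * v + vs * u) / 2);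
         -(α * (us * v + vs * u) / 2), vs * (γ * d + α * u)]).det
      = us * (d + α * v) * (vs * (γ * d + α * u)) - (α * (us * v + vs * u) / 2) ^ 2 := by
    simp [Matrix.det_fin_two]; ring
  have hac : γ * us * vs * d ^ 2 ≤ us * (d + α * v) * (vs * (γ * d + α * u)) := by
    nlinarith [mul_nonneg (mul_nonneg (mul_nonneg (mul_nonneg hus.le hvs.le) hα.le) hu0) hd.le,
      mul_nonneg (mul_nonneg (mul_nonneg (mul_nonneg (mul_nonneg hus.le hvs.le) hγ.le) hα.le) hv0) hd.le,
      mul_nonneg (mul_nonneg (mul_nonneg (mul_nonneg (mul_nonneg hus.le hvs.le) hα.le) hα.le) hu0) hv0]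
  have hsq : (α * (us * v + vs * u) / 2) ^ 2 ≤ ((β * us + α * vs) * K / 2) ^ 2 := by
    nlinarith [mul_self_le_mul_self hb0 hb]
  have h2 : γ * us * vs * d ^ 2 - ((β * us + α * vs) * K / 2) ^ 2 ≤
      (!![us * (d + α * v), -(α * (us * v + vs * u) / 2);
           -(α * (us * v + vs * u) / 2), vs * (γ * d + α * u)]).det := by
    rw [hdet]; linarith
  refine ⟨?_, h2, h3⟩
  have ha : 0 < us * (d + α * v) := by positivity
  have hc : 0 < vs * (γ * d + α * u) := by positivity
  have hbac : (-(α * (us * v + vs * u) / 2)) ^ 2 ≤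
      us * (d + α * v) * (vs * (γ * d + α * u)) := by
    rw [neg_pow]; simp only [neg_one_sq, one_mul]; linarith
  exact fin2_posSemidef _ _ _ ha.le hc.le hbac
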